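/- There is a partition of I into finitely many D-positive sets S₀, …, S_{m−1} (with m ≤ 2^{n−1} when n ≥ 1) such that for every A ∈ 𝒜 there exists k < m and a truth value t with: S_k ∖ A is D-null if t = 1, and S_k ∩ A is D-null if t = 0 (i.e. A is decided modulo D on the cell S_k). -/

import Mathlib

/-- Shelah 950, Claim d23(1) (combinatorial content): let `D` be a proper filter on `I`
and `𝒜` a family of subsets; if no `n` sets from `𝒜` have all `2ⁿ` Boolean combination
cells `D`-positive (`n ≥ 1`), then `I` can be partitioned into `m ≤ 2^(n-1)` `D`-positive
sets `S₀, …, S_{m-1}` such that every `A ∈ 𝒜` is decided modulo `D` on some cell. -/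
theorem stmt_7 {I : Type*} (D : Filter I) [D.NeBot] (𝒜 : Set (Set I)) (n : ℕ)
    (hn : 1 ≤ n)
    (h : ¬ ∃ A : Fin n → Set I, (∀ k, A k ∈ 𝒜) ∧
        ∀ η : Fin n → Bool, (⋂ k, cond (η k) (A k) (A k)ᶜ)ᶜ ∉ D) :
    ∃ (m : ℕ) (S : Fin m → Set I),
      m ≤ 2 ^ (n - 1) ∧
      (∀ k, (S k)ᶜ ∉ D) ∧
      (∀ k l, k ≠ l → Disjoint (S k) (S l)) ∧
      (⋃ k, S k) = Set.univ ∧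
      (∀ A ∈ 𝒜, ∃ k, (S k \ A)ᶜ ∈ D ∨ (S k ∩ A)ᶜ ∈ D) := by
  classical
  set P : ℕ → Prop := fun j => ∃ A : Fin j → Set I, (∀ k, A k ∈ 𝒜) ∧
      ∀ η : Fin j → Bool, (⋂ k, cond (η k) (A k) (A k)ᶜ)ᶜ ∉ D with hPdef
  have hP0 : P 0 := by
    refine ⟨Fin.elim0, fun k => k.elim0, fun η => ?_⟩
    simp only [Set.iInter_of_empty, Set.compl_univ]
    exact Filter.empty_notMem D
  have hex : ∃ j, ¬ P j := ⟨n, h⟩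
  have hj0spec : ¬ P (Nat.find hex) := Nat.find_spec hex
  have hj0n : Nat.find hex ≤ n := Nat.find_le h
  have hj0pos : 0 < Nat.find hex := by
    rcases Nat.eq_zero_or_pos (Nat.find hex) with h0 | h0
    · rw [h0] at hj0spec; exact absurd hP0 hj0spec
    · exact h0
  set j : ℕ := Nat.find hex - 1 with hjdef
  have hjlt : j < Nat.find hex := Nat.sub_lt hj0pos one_pos
  have hPj : P j := not_not.mp (fun hc => (Nat.find_min hex hjlt) hc)
  have hPj1 : ¬ P (j + 1) := by
    have : j + 1 = Nat.find hex := Nat.succ_pred_eq_of_pos hj0pos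
    rw [this]; exact hj0spec
  have hjn : j ≤ n - 1 := Nat.sub_le_sub_right hj0n 1
  obtain ⟨A, hA𝒜, hApos⟩ := hPj
  have hcard : Fintype.card (Fin j → Bool) = 2 ^ j := by simp
  let e : (Fin j → Bool) ≃ Fin (2 ^ j) := Fintype.equivFinOfCardEq hcard
  refine ⟨2 ^ j, fun k => ⋂ i, cond (e.symm k i) (A i) (A i)ᶜ,
    Nat.pow_le_pow_right two_pos hjn, fun k => hApos (e.symm k), ?_, ?_, ?_⟩
  · -- disjointness
    intro k l hkl
    have hne : e.symm k ≠ e.symm l := fun hh => hkl (e.symm.injective hh)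
    obtain ⟨i, hi⟩ := Function.ne_iff.mp hne
    rw [Set.disjoint_left]
    intro x hx hx'
    have h1 := Set.mem_iInter.mp hx i
    have h2 := Set.mem_iInter.mp hx' i
    cases hb : e.symm k i <;> cases hb' : e.symm l i <;>
        rw [hb] at h1 hi <;> rw [hb'] at h2 hi <;>
        simp only [Bool.cond_true, Bool.cond_false, Set.mem_compl_iff] at h1 h2
    · exact hi rfl
    · exact h1 h2
    · exact h2 h1
    · exact hi rfl
  · -- union is univ
    ext x
    simp only [Set.mem_iUnion, Set.mem_univ, iff_true]
    refine ⟨e (fun i => decide (x ∈ A i)), ?_⟩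
    rw [Set.mem_iInter]
    intro i
    rw [Equiv.symm_apply_apply]
    by_cases hx : x ∈ A i
    · simp [hx]
    · simp [hx]
  · -- every A ∈ 𝒜 is decided on some cell
    intro B hB
    set A' : Fin (j + 1) → Set I := Fin.snoc A B with hA'def
    have hA'𝒜 : ∀ k, A' k ∈ 𝒜 := by
      intro k
      refine Fin.lastCases ?_ ?_ k
      · simpa [hA'def, Fin.snoc_last] using hB
      · intro i; simpa [hA'def, Fin.snoc_castSucc] using hA𝒜 i
    have hη' : ∃ η' : Fin (j + 1) → Bool,
        (⋂ k, cond (η' k) (A' k) (A' k)ᶜ)ᶜ ∈ D := by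
      by_contra hc
      push_neg at hc
      exact hPj1 ⟨A', hA'𝒜, hc⟩
    obtain ⟨η', hη'⟩ := hη'
    set η : Fin j → Bool := fun i => η' i.castSucc with hηdef
    have hsplit : (⋂ k, cond (η' k) (A' k) (A' k)ᶜ)
        = (⋂ i, cond (η i) (A i) (A i)ᶜ) ∩ cond (η' (Fin.last j)) B Bᶜ := by
      ext x
      simp only [Set.mem_iInter, Set.mem_inter_iff]
      constructor
      · intro hx
        refine ⟨fun i => ?_, ?_⟩
        · have := hx i.castSucc
          simpa [hA'def, hηdef, Fin.snoc_castSucc] using this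
        · have := hx (Fin.last j)
          simpa [hA'def, Fin.snoc_last] using this
      · rintro ⟨h1, h2⟩ k
        refine Fin.lastCases ?_ ?_ k
        · simpa [hA'def, Fin.snoc_last] using h2
        · intro i
          have := h1 i
          simpa [hA'def, hηdef, Fin.snoc_castSucc] using this
    refine ⟨e η, ?_⟩
    have hcell : ⋂ i, cond (e.symm (e η) i) (A i) (A i)ᶜ
        = ⋂ i, cond (η i) (A i) (A i)ᶜ := by
      rw [Equiv.symm_apply_apply]
    cases hb : η' (Fin.last j) with
    | true =>
      refine Or.inr ?_
      have : (⋂ i, cond (e.symm (e η) i) (A i) (A i)ᶜ) ∩ B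
          = ⋂ k, cond (η' k) (A' k) (A' k)ᶜ := by
        rw [hcell, hsplit, hb]; rfl
      rw [this]; exact hη'
    | false =>
      refine Or.inl ?_
      have : (⋂ i, cond (e.symm (e η) i) (A i) (A i)ᶜ) \ B
          = ⋂ k, cond (η' k) (A' k) (A' k)ᶜ := by
        rw [hcell, hsplit, hb, Set.diff_eq]; rfl
      rw [this]; exact hη'
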